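/- Let A = K[[f_1,…,f_s]] ⊆ F = K[[x_1,…,x_n]] with the length of F/A as an A-module finite, let a ∈ (ℝ_{>0})^n, and let {g_1,…,g_r} be an a-reduced canonical basis of A. Then in(A,a) = K[[in(g_1,a),…,in(g_r,a)]], i.e., the a-initial algebra of A is generated (as a closed K-subalgebra) by the a-initial forms of the elements of the reduced canonical basis. -/

import Mathlib

noncomputable section

namespace CanonicalFan

open MvPowerSeries

variable (K : Type*) [Field K] (n : ℕ)

/-- The weight `⟨a, α⟩ = ∑ i, a i * α i` of an exponent `α` with respect to `a`. -/
def weight (a : Fin n → ℝ) (α : Fin n →₀ ℕ) : ℝ := ∑ i, a i * (α i : ℝ)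

/-- The support of a formal power series. -/
def supp (f : MvPowerSeries (Fin n) K) : Set (Fin n →₀ ℕ) :=
  {α | MvPowerSeries.coeff α f ≠ 0}

/-- The `a`-valuation `ν(f,a)`, with the convention `ν(0,a) = +∞`. -/
def nu (a : Fin n → ℝ) (f : MvPowerSeries (Fin n) K) : EReal :=
  sInf ((fun α => ((weight n a α : ℝ) : EReal)) '' supp K n f)

open Classical in
/-- The `a`-initial form `in(f,a)` of a power series. -/
def initialForm (a : Fin n → ℝ) (f : MvPowerSeries (Fin n) K) :
    MvPowerSeries (Fin n) K :=
  fun α => if ((weight n a α : ℝ) : EReal) = nu K n a f then MvPowerSeries.coeff α f else 0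

open Classical in
/-- `exp(f,a)`: the `≺`-maximal element of the support of `in(f,a)`, where `≺` is the
well-ordering `r` (junk value `0` if no maximal element exists). -/
def exponent (r : (Fin n →₀ ℕ) → (Fin n →₀ ℕ) → Prop) (a : Fin n → ℝ)
    (f : MvPowerSeries (Fin n) K) : Fin n →₀ ℕ :=
  if h : ∃ β ∈ supp K n (initialForm K n a f),
      ∀ γ ∈ supp K n (initialForm K n a f), γ = β ∨ r γ β
  then h.choose else 0

/-- The `a`-leading monomial `M(f,a) = c_{exp(f,a)} x^{exp(f,a)}`. -/
def leadMon (r : (Fin n →₀ ℕ) → (Fin n →₀ ℕ) → Prop) (a : Fin n → ℝ)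
    (f : MvPowerSeries (Fin n) K) : MvPowerSeries (Fin n) K :=
  MvPowerSeries.monomial (exponent K n r a f)
    (MvPowerSeries.coeff (exponent K n r a f) f)

/-- The maximal ideal `(x_1, …, x_n)` of `K[[x_1,…,x_n]]`. -/
def mIdeal : Ideal (MvPowerSeries (Fin n) K) :=
  Ideal.span (Set.range (MvPowerSeries.X : Fin n → MvPowerSeries (Fin n) K))

/-- `K[[S]]`: the smallest `K`-subalgebra of `K[[x_1,…,x_n]]` containing `S` and closed in
the `(x_1,…,x_n)`-adic topology; concretely, the adic closure of `Algebra.adjoin K S`. -/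
def closedAdjoin (S : Set (MvPowerSeries (Fin n) K)) :
    Subalgebra K (MvPowerSeries (Fin n) K) where
  carrier := {f | ∀ N : ℕ, ∃ g ∈ Algebra.adjoin K S, f - g ∈ (mIdeal K n) ^ N}
  algebraMap_mem' c N :=
    ⟨algebraMap K _ c, Subalgebra.algebraMap_mem _ c, by simp [Ideal.zero_mem]⟩
  add_mem' {f g} hf hg N := by
    obtain ⟨p, hp, hfp⟩ := hf N
    obtain ⟨q, hq, hgq⟩ := hg N
    exact ⟨p + q, add_mem hp hq, by simpa [add_sub_add_comm] using Ideal.add_mem _ hfp hgq⟩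
  mul_mem' {f g} hf hg N := by
    obtain ⟨p, hp, hfp⟩ := hf N
    obtain ⟨q, hq, hgq⟩ := hg N
    refine ⟨p * q, mul_mem hp hq, ?_⟩
    have h : f * g - p * q = f * (g - q) + (f - p) * q := by ring
    rw [h]
    exact Ideal.add_mem _ (Ideal.mul_mem_left _ _ hgq) (Ideal.mul_mem_right _ _ hfp)

/-- `exp(A,a) = {exp(f,a) : f ∈ A, f ≠ 0}`. -/
def expSet (r : (Fin n →₀ ℕ) → (Fin n →₀ ℕ) → Prop) (a : Fin n → ℝ)
    (A : Set (MvPowerSeries (Fin n) K)) : Set (Fin n →₀ ℕ) :=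
  {β | ∃ f ∈ A, f ≠ 0 ∧ exponent K n r a f = β}

/-- `in(A,a) = K[[in(f,a) : f ∈ A ∖ {0}]]`. -/
def inAlgebra (a : Fin n → ℝ) (A : Set (MvPowerSeries (Fin n) K)) :
    Subalgebra K (MvPowerSeries (Fin n) K) :=
  closedAdjoin K n {g | ∃ f ∈ A, f ≠ 0 ∧ initialForm K n a f = g}

/-- `M(A,a) = K[[M(f,a) : f ∈ A ∖ {0}]]`. -/
def leadAlgebra (r : (Fin n →₀ ℕ) → (Fin n →₀ ℕ) → Prop) (a : Fin n → ℝ)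
    (A : Set (MvPowerSeries (Fin n) K)) : Subalgebra K (MvPowerSeries (Fin n) K) :=
  closedAdjoin K n {g | ∃ f ∈ A, f ≠ 0 ∧ leadMon K n r a f = g}

set_option synthInstance.maxHeartbeats 1000000 in
/-- The length of `F/A` as an `A`-module is finite. -/
def FiniteColength (A : Subalgebra K (MvPowerSeries (Fin n) K)) : Prop :=
  IsFiniteLength A
    (MvPowerSeries (Fin n) K ⧸ LinearMap.range (Algebra.linearMap A (MvPowerSeries (Fin n) K)))

/-- `{g_1,…,g_r}` is an `a`-canonical basis of `A`. -/
def IsCanonicalBasis (r : (Fin n →₀ ℕ) → (Fin n →₀ ℕ) → Prop) (a : Fin n → ℝ)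
    (A : Subalgebra K (MvPowerSeries (Fin n) K)) {m : ℕ}
    (g : Fin m → MvPowerSeries (Fin n) K) : Prop :=
  (∀ i, g i ∈ A ∧ g i ≠ 0) ∧
    leadAlgebra K n r a (A : Set (MvPowerSeries (Fin n) K)) =
      closedAdjoin K n (Set.range fun i => leadMon K n r a (g i))

/-- `{g_1,…,g_r}` is a minimal `a`-canonical basis of `A`. -/
def IsMinimalCanonicalBasis (r : (Fin n →₀ ℕ) → (Fin n →₀ ℕ) → Prop) (a : Fin n → ℝ)
    (A : Subalgebra K (MvPowerSeries (Fin n) K)) {m : ℕ}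
    (g : Fin m → MvPowerSeries (Fin n) K) : Prop :=
  IsCanonicalBasis K n r a A g ∧
    ∀ T : Set (MvPowerSeries (Fin n) K),
      T ⊂ Set.range (fun i => leadMon K n r a (g i)) →
        closedAdjoin K n T ≠ leadAlgebra K n r a (A : Set (MvPowerSeries (Fin n) K))

/-- `{g_1,…,g_r}` is the `a`-reduced canonical basis of `A`. -/
def IsReducedCanonicalBasis (r : (Fin n →₀ ℕ) → (Fin n →₀ ℕ) → Prop) (a : Fin n → ℝ)
    (A : Subalgebra K (MvPowerSeries (Fin n) K)) {m : ℕ}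
    (g : Fin m → MvPowerSeries (Fin n) K) : Prop :=
  IsMinimalCanonicalBasis K n r a A g ∧
    (∀ i, MvPowerSeries.coeff (exponent K n r a (g i)) (g i) = 1) ∧
    ∀ i, ∀ α ∈ supp K n (g i - leadMon K n r a (g i)),
      (MvPowerSeries.monomial α (1 : K)) ∉
        closedAdjoin K n (Set.range fun j => leadMon K n r a (g j))

/-- A power series is a (nonzero) monomial. -/
def IsMonomial (g : MvPowerSeries (Fin n) K) : Prop :=
  ∃ (α : Fin n →₀ ℕ) (c : K), c ≠ 0 ∧ g = MvPowerSeries.monomial α c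


section Aux

set_option linter.unusedSectionVars false

variable {K} {n}
variable {a : Fin n → ℝ} {r : (Fin n →₀ ℕ) → (Fin n →₀ ℕ) → Prop}

lemma weight_add (α β : Fin n →₀ ℕ) :
    weight n a (α + β) = weight n a α + weight n a β := by
  simp [weight, Finsupp.add_apply, mul_add, Finset.sum_add_distrib]

lemma weight_zero : weight n a (0 : Fin n →₀ ℕ) = 0 := by simp [weight]

lemma mem_supp_iff {f : MvPowerSeries (Fin n) K} {α : Fin n →₀ ℕ} :
    α ∈ supp K n f ↔ MvPowerSeries.coeff α f ≠ 0 := Iff.rfl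

lemma coeff_initialForm (f : MvPowerSeries (Fin n) K) (α : Fin n →₀ ℕ) :
    MvPowerSeries.coeff α (initialForm K n a f) =
      if ((weight n a α : ℝ) : EReal) = nu K n a f then MvPowerSeries.coeff α f else 0 := rfl

lemma nu_le {f : MvPowerSeries (Fin n) K} {α : Fin n →₀ ℕ} (h : α ∈ supp K n f) :
    nu K n a f ≤ ((weight n a α : ℝ) : EReal) :=
  sInf_le ⟨α, h, rfl⟩

lemma coeff_eq_zero_of_lt_nu {f : MvPowerSeries (Fin n) K} {α : Fin n →₀ ℕ}
    (h : ((weight n a α : ℝ) : EReal) < nu K n a f) : MvPowerSeries.coeff α f = 0 := by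
  by_contra hc
  exact absurd (nu_le hc) (not_le.mpr h)

/-- finiteness of sub-level sets of the weight. -/
lemma finite_weight_le (ha : ∀ i, 0 < a i) (d : ℝ) :
    {α : Fin n →₀ ℕ | weight n a α ≤ d}.Finite := by
  classical
  have key : ∀ α ∈ {α : Fin n →₀ ℕ | weight n a α ≤ d}, ∀ i, (α i : ℝ) ≤ d / a i := by
    intro α hα i
    rw [le_div_iff₀ (ha i)]
    calc (α i : ℝ) * a i = a i * (α i : ℝ) := mul_comm _ _
    _ ≤ ∑ j, a j * (α j : ℝ) := by
        apply Finset.single_le_sum (f := fun j => a j * (α j : ℝ)) _ (Finset.mem_univ i)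
        intro j _
        exact mul_nonneg (le_of_lt (ha j)) (Nat.cast_nonneg _)
    _ ≤ d := hα
  -- bound each coordinate by a natural number
  obtain ⟨C, hC⟩ : ∃ C : ℕ, ∀ i, d / a i ≤ C := by
    obtain ⟨x, hx⟩ := Finset.exists_le (Finset.univ.image fun i => d / a i)
    obtain ⟨C, hC⟩ := exists_nat_ge x
    refine ⟨C, fun i => le_trans (hx _ ?_) hC⟩
    exact Finset.mem_image_of_mem _ (Finset.mem_univ i)
  have hsub : {α : Fin n →₀ ℕ | weight n a α ≤ d} ⊆
      (fun φ : Fin n →₀ ℕ => (φ : Fin n → ℕ)) ⁻¹' (Set.univ.pi fun _ => Set.Iic C) := by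
    intro α hα
    intro i _
    have := (key α hα i).trans (hC i)
    exact_mod_cast this
  have hfin : ((fun φ : Fin n →₀ ℕ => (φ : Fin n → ℕ)) ⁻¹'
      (Set.univ.pi fun _ => Set.Iic C)).Finite := by
    apply Set.Finite.preimage
    · exact Function.Injective.injOn (DFunLike.coe_injective)
    · exact Set.Finite.pi fun _ => Set.finite_Iic C
  exact hfin.subset hsub

lemma supp_nonempty {f : MvPowerSeries (Fin n) K} (hf : f ≠ 0) : (supp K n f).Nonempty := by
  by_contra h
  rw [Set.not_nonempty_iff_eq_empty] at h
  apply hf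
  ext β
  rw [map_zero]
  by_contra hβ
  have hβ' : β ∈ supp K n f := hβ
  rw [h] at hβ'
  exact hβ'

/-- attainment of the minimum weight. -/
lemma exists_min_weight (ha : ∀ i, 0 < a i) {f : MvPowerSeries (Fin n) K} (hf : f ≠ 0) :
    ∃ α₀ ∈ supp K n f, ∀ β ∈ supp K n f, weight n a α₀ ≤ weight n a β := by
  obtain ⟨α₁, hα₁⟩ := supp_nonempty hf
  classical
  set S : Set (Fin n →₀ ℕ) := {β ∈ supp K n f | weight n a β ≤ weight n a α₁}
  have hSfin : S.Finite := (finite_weight_le ha (weight n a α₁)).subset (fun β hβ => hβ.2)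
  have hSne : S.Nonempty := ⟨α₁, hα₁, le_rfl⟩
  obtain ⟨α₀, hα₀S, hmin⟩ := Set.Finite.exists_minimalFor (fun β => weight n a β) S hSfin hSne
  refine ⟨α₀, hα₀S.1, fun β hβ => ?_⟩
  by_cases hb : weight n a β ≤ weight n a α₁
  · by_contra hlt
    push_neg at hlt
    have := hmin ⟨hβ, hb⟩ (le_of_lt hlt)
    exact absurd this (not_le.mpr hlt)
  · push_neg at hb
    exact le_trans hα₀S.2 (le_of_lt hb)

lemma nu_eq_of_min {f : MvPowerSeries (Fin n) K} {α₀ : Fin n →₀ ℕ}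
    (h0 : α₀ ∈ supp K n f) (hmin : ∀ β ∈ supp K n f, weight n a α₀ ≤ weight n a β) :
    nu K n a f = ((weight n a α₀ : ℝ) : EReal) := by
  refine le_antisymm (nu_le h0) (le_sInf ?_)
  rintro x ⟨β, hβ, rfl⟩
  exact EReal.coe_le_coe_iff.mpr (hmin β hβ)

lemma nu_eq_coe (ha : ∀ i, 0 < a i) {f : MvPowerSeries (Fin n) K} (hf : f ≠ 0) :
    ∃ d : ℝ, nu K n a f = (d : EReal) := by
  obtain ⟨α₀, h0, hmin⟩ := exists_min_weight ha hf
  exact ⟨weight n a α₀, nu_eq_of_min h0 hmin⟩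

lemma mem_supp_initialForm_iff {f : MvPowerSeries (Fin n) K} {β : Fin n →₀ ℕ} :
    β ∈ supp K n (initialForm K n a f) ↔
      β ∈ supp K n f ∧ ((weight n a β : ℝ) : EReal) = nu K n a f := by
  constructor
  · intro h
    rw [mem_supp_iff, coeff_initialForm] at h
    by_cases hw : ((weight n a β : ℝ) : EReal) = nu K n a f
    · rw [if_pos hw] at h; exact ⟨h, hw⟩
    · rw [if_neg hw] at h; exact absurd rfl h
  · rintro ⟨h1, h2⟩
    rw [mem_supp_iff, coeff_initialForm, if_pos h2]
    exact h1

lemma coeff_initialForm_of_mem {f : MvPowerSeries (Fin n) K} {β : Fin n →₀ ℕ}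
    (h : ((weight n a β : ℝ) : EReal) = nu K n a f) :
    MvPowerSeries.coeff β (initialForm K n a f) = MvPowerSeries.coeff β f := by
  rw [coeff_initialForm, if_pos h]

lemma initialForm_ne_zero (ha : ∀ i, 0 < a i) {f : MvPowerSeries (Fin n) K} (hf : f ≠ 0) :
    initialForm K n a f ≠ 0 := by
  obtain ⟨α₀, h0, hmin⟩ := exists_min_weight ha hf
  intro hc
  have : α₀ ∈ supp K n (initialForm K n a f) :=
    mem_supp_initialForm_iff.mpr ⟨h0, (nu_eq_of_min h0 hmin).symm⟩
  rw [hc] at this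
  exact this (map_zero _)

lemma supp_initialForm_finite (ha : ∀ i, 0 < a i) (f : MvPowerSeries (Fin n) K) :
    (supp K n (initialForm K n a f)).Finite := by
  by_cases hf : f = 0
  · subst hf
    have : initialForm K n a (0 : MvPowerSeries (Fin n) K) = 0 := by
      ext β
      rw [coeff_initialForm, map_zero]
      split <;> simp
    rw [this]
    convert Set.finite_empty
    ext β
    simp [mem_supp_iff]
  · obtain ⟨α₀, h0, hmin⟩ := exists_min_weight ha hf
    have hnu := nu_eq_of_min (a := a) h0 hmin
    apply (finite_weight_le ha (weight n a α₀)).subset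
    intro β hβ
    obtain ⟨h1, h2⟩ := mem_supp_initialForm_iff.mp hβ
    rw [hnu] at h2
    exact le_of_eq (EReal.coe_eq_coe_iff.mp h2)

/-- a finite nonempty set has an `r`-maximum. -/
lemma exists_rmax (hr : IsWellOrder (Fin n →₀ ℕ) r) {S : Set (Fin n →₀ ℕ)}
    (hfin : S.Finite) (hne : S.Nonempty) :
    ∃ β ∈ S, ∀ γ ∈ S, γ = β ∨ r γ β := by
  classical
  obtain ⟨t, rfl⟩ : ∃ t : Finset (Fin n →₀ ℕ), S = ↑t := ⟨hfin.toFinset, by simp⟩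
  induction t using Finset.induction_on with
  | empty => simp at hne
  | @insert x t hx ih =>
    by_cases ht : t.Nonempty
    · obtain ⟨β, hβ, hmax⟩ := ih (Set.toFinite _) (by simpa using ht)
      rcases trichotomous_of r x β with h|h|h
      · refine ⟨β, by simp [hβ], ?_⟩
        intro γ hγ
        rcases Finset.mem_insert.mp (by simpa using hγ) with rfl|hγt
        · exact Or.inr h
        · exact hmax γ (by simpa using hγt)
      · subst h
        refine ⟨x, by simp, ?_⟩
        intro γ hγ
        rcases Finset.mem_insert.mp (by simpa using hγ) with rfl|hγt
        · exact Or.inl rfl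
        · exact hmax γ (by simpa using hγt)
      · refine ⟨x, by simp, ?_⟩
        intro γ hγ
        rcases Finset.mem_insert.mp (by simpa using hγ) with rfl|hγt
        · exact Or.inl rfl
        · rcases hmax γ (by simpa using hγt) with rfl|hγβ
          · exact Or.inr h
          · exact Or.inr (Trans.trans hγβ h)
    · rw [Finset.not_nonempty_iff_eq_empty] at ht
      subst ht
      exact ⟨x, by simp, by intro γ hγ; simp at hγ; exact Or.inl hγ⟩

lemma exponent_spec (hr : IsWellOrder (Fin n →₀ ℕ) r) (ha : ∀ i, 0 < a i)
    {f : MvPowerSeries (Fin n) K} (hf : f ≠ 0) :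
    exponent K n r a f ∈ supp K n (initialForm K n a f) ∧
      ∀ γ ∈ supp K n (initialForm K n a f), γ = exponent K n r a f ∨ r γ (exponent K n r a f) := by
  classical
  have hex : ∃ β ∈ supp K n (initialForm K n a f),
      ∀ γ ∈ supp K n (initialForm K n a f), γ = β ∨ r γ β :=
    exists_rmax hr (supp_initialForm_finite ha f)
      (supp_nonempty (initialForm_ne_zero ha hf))
  rw [exponent, dif_pos hex]
  exact ⟨hex.choose_spec.1, hex.choose_spec.2⟩

lemma exponent_eq (hr : IsWellOrder (Fin n →₀ ℕ) r) (ha : ∀ i, 0 < a i)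
    {f : MvPowerSeries (Fin n) K} (hf : f ≠ 0) {β : Fin n →₀ ℕ}
    (hβ : β ∈ supp K n (initialForm K n a f))
    (hmax : ∀ γ ∈ supp K n (initialForm K n a f), γ = β ∨ r γ β) :
    exponent K n r a f = β := by
  obtain ⟨h1, h2⟩ := exponent_spec hr ha hf
  rcases h2 β hβ with h|h
  · exact h.symm
  · rcases hmax _ h1 with h'|h'
    · exact h'
    · exact absurd (Trans.trans h h') (irrefl β)

lemma exponent_mem_supp (hr : IsWellOrder (Fin n →₀ ℕ) r) (ha : ∀ i, 0 < a i)
    {f : MvPowerSeries (Fin n) K} (hf : f ≠ 0) :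
    exponent K n r a f ∈ supp K n f :=
  (mem_supp_initialForm_iff.mp (exponent_spec hr ha hf).1).1

lemma nu_eq_weight_exponent (hr : IsWellOrder (Fin n →₀ ℕ) r) (ha : ∀ i, 0 < a i)
    {f : MvPowerSeries (Fin n) K} (hf : f ≠ 0) :
    nu K n a f = ((weight n a (exponent K n r a f) : ℝ) : EReal) :=
  ((mem_supp_initialForm_iff.mp (exponent_spec hr ha hf).1).2).symm

section Mul

variable (hr : IsWellOrder (Fin n →₀ ℕ) r)
  (hradd : ∀ α β γ : Fin n →₀ ℕ, r α β → r (α + γ) (β + γ))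
  (ha : ∀ i, 0 < a i)

include hr hradd ha

lemma rle_add {γ δ γ' δ' : Fin n →₀ ℕ} (h : γ = δ ∨ r γ δ) (h' : γ' = δ' ∨ r γ' δ') :
    γ + γ' = δ + δ' ∨ r (γ + γ') (δ + δ') := by
  rcases h with rfl|h
  · rcases h' with rfl|h'
    · exact Or.inl rfl
    · refine Or.inr ?_
      rw [add_comm γ γ', add_comm γ δ']
      exact hradd _ _ _ h'
  · rcases h' with rfl|h'
    · exact Or.inr (hradd _ _ _ h)
    · refine Or.inr (IsTrans.trans _ _ _ (hradd _ _ _ h) ?_)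
      rw [add_comm δ γ', add_comm δ δ']
      exact hradd _ _ _ h'

lemma rle_add_eq {γ δ γ' δ' : Fin n →₀ ℕ} (h : γ = δ ∨ r γ δ) (h' : γ' = δ' ∨ r γ' δ')
    (heq : γ + γ' = δ + δ') : γ = δ ∧ γ' = δ' := by
  rcases rle_add hr hradd ha h h' with h''|h''
  · rcases h with rfl|hs
    · exact ⟨rfl, add_left_cancel heq⟩
    · rcases h' with rfl|hs'
      · exfalso
        rw [add_comm γ γ', add_comm δ γ'] at heq
        rw [add_left_cancel_iff] at heq
        subst heq
        exact absurd hs (irrefl γ)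
      · exfalso
        have h1 : r (γ + γ') (δ + γ') := hradd _ _ _ hs
        have h2 : r (δ + γ') (δ + δ') := by
          rw [add_comm δ γ', add_comm δ δ']
          exact hradd _ _ _ hs'
        rw [heq] at h1
        exact absurd (IsTrans.trans _ _ _ h1 h2) (irrefl _)
  · rw [heq] at h''
    exact absurd h'' (irrefl _)

variable {f g : MvPowerSeries (Fin n) K}

lemma coeff_mul_eq_coeff_initialForm_mul (hf : f ≠ 0) (hg : g ≠ 0) {β : Fin n →₀ ℕ}
    (hβ : weight n a β ≤ weight n a (exponent K n r a f) + weight n a (exponent K n r a g)) :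
    MvPowerSeries.coeff β (f * g) =
      MvPowerSeries.coeff β (initialForm K n a f * initialForm K n a g) := by
  classical
  rw [MvPowerSeries.coeff_mul, MvPowerSeries.coeff_mul]
  apply Finset.sum_congr rfl
  rintro ⟨p₁, p₂⟩ hp
  rw [Finset.HasAntidiagonal.mem_antidiagonal] at hp
  simp only
  by_cases h1 : MvPowerSeries.coeff p₁ f = 0
  · rw [h1, coeff_initialForm, h1]
    simp
  by_cases h2 : MvPowerSeries.coeff p₂ g = 0
  · rw [h2, coeff_initialForm (f := g), h2]
    simp
  -- both in supports
  have hw1 : weight n a (exponent K n r a f) ≤ weight n a p₁ := by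
    have := nu_le (a := a) (h1 : p₁ ∈ supp K n f)
    rw [nu_eq_weight_exponent hr ha hf] at this
    exact EReal.coe_le_coe_iff.mp this
  have hw2 : weight n a (exponent K n r a g) ≤ weight n a p₂ := by
    have := nu_le (a := a) (h2 : p₂ ∈ supp K n g)
    rw [nu_eq_weight_exponent hr ha hg] at this
    exact EReal.coe_le_coe_iff.mp this
  have hwβ : weight n a β = weight n a p₁ + weight n a p₂ := by
    rw [← hp, weight_add]
  have he1 : weight n a p₁ = weight n a (exponent K n r a f) := by linarith
  have he2 : weight n a p₂ = weight n a (exponent K n r a g) := by linarith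
  rw [coeff_initialForm_of_mem, coeff_initialForm_of_mem]
  · rw [nu_eq_weight_exponent hr ha hg, he2]
  · rw [nu_eq_weight_exponent hr ha hf, he1]

lemma coeff_mul_eq_zero_of_lt (hf : f ≠ 0) (hg : g ≠ 0) {β : Fin n →₀ ℕ}
    (hβ : weight n a β < weight n a (exponent K n r a f) + weight n a (exponent K n r a g)) :
    MvPowerSeries.coeff β (f * g) = 0 := by
  classical
  rw [MvPowerSeries.coeff_mul]
  apply Finset.sum_eq_zero
  rintro ⟨p₁, p₂⟩ hp
  rw [Finset.HasAntidiagonal.mem_antidiagonal] at hp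
  simp only
  by_contra hc
  have h1 : MvPowerSeries.coeff p₁ f ≠ 0 := fun h => hc (by rw [h, zero_mul])
  have h2 : MvPowerSeries.coeff p₂ g ≠ 0 := fun h => hc (by rw [h, mul_zero])
  have hw1 : weight n a (exponent K n r a f) ≤ weight n a p₁ := by
    have := nu_le (a := a) (h1 : p₁ ∈ supp K n f)
    rw [nu_eq_weight_exponent hr ha hf] at this
    exact EReal.coe_le_coe_iff.mp this
  have hw2 : weight n a (exponent K n r a g) ≤ weight n a p₂ := by
    have := nu_le (a := a) (h2 : p₂ ∈ supp K n g)
    rw [nu_eq_weight_exponent hr ha hg] at this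
    exact EReal.coe_le_coe_iff.mp this
  have : weight n a β = weight n a p₁ + weight n a p₂ := by rw [← hp, weight_add]
  linarith

lemma weight_of_mem_supp_initialForm_mul (hf : f ≠ 0) (hg : g ≠ 0) {β : Fin n →₀ ℕ}
    (hβ : β ∈ supp K n (initialForm K n a f * initialForm K n a g)) :
    weight n a β = weight n a (exponent K n r a f) + weight n a (exponent K n r a g) ∧
      ∃ p₁ p₂, p₁ ∈ supp K n (initialForm K n a f) ∧ p₂ ∈ supp K n (initialForm K n a g) ∧
        β = p₁ + p₂ := by
  classical
  rw [mem_supp_iff, MvPowerSeries.coeff_mul] at hβ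
  obtain ⟨⟨p₁, p₂⟩, hp, hne⟩ := Finset.exists_ne_zero_of_sum_ne_zero hβ
  rw [Finset.HasAntidiagonal.mem_antidiagonal] at hp
  simp only at hne
  have h1 : p₁ ∈ supp K n (initialForm K n a f) := fun h => hne (by rw [h, zero_mul])
  have h2 : p₂ ∈ supp K n (initialForm K n a g) := fun h => hne (by rw [h, mul_zero])
  obtain ⟨h1s, h1w⟩ := mem_supp_initialForm_iff.mp h1
  obtain ⟨h2s, h2w⟩ := mem_supp_initialForm_iff.mp h2
  rw [nu_eq_weight_exponent hr ha hf] at h1w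
  rw [nu_eq_weight_exponent hr ha hg] at h2w
  have e1 := EReal.coe_eq_coe_iff.mp h1w
  have e2 := EReal.coe_eq_coe_iff.mp h2w
  constructor
  · rw [← hp, weight_add, e1, e2]
  · exact ⟨p₁, p₂, h1, h2, hp.symm⟩

lemma coeff_top_initialForm_mul (hf : f ≠ 0) (hg : g ≠ 0) :
    MvPowerSeries.coeff (exponent K n r a f + exponent K n r a g)
        (initialForm K n a f * initialForm K n a g) =
      MvPowerSeries.coeff (exponent K n r a f) f *
        MvPowerSeries.coeff (exponent K n r a g) g := by
  classical
  rw [MvPowerSeries.coeff_mul]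
  rw [Finset.sum_eq_single_of_mem (exponent K n r a f, exponent K n r a g)
    (Finset.HasAntidiagonal.mem_antidiagonal.mpr rfl)]
  · rw [coeff_initialForm_of_mem, coeff_initialForm_of_mem]
    · exact (nu_eq_weight_exponent hr ha hg).symm
    · exact (nu_eq_weight_exponent hr ha hf).symm
  · rintro ⟨p₁, p₂⟩ hp hne
    rw [Finset.HasAntidiagonal.mem_antidiagonal] at hp
    simp only
    by_contra hc
    have h1 : p₁ ∈ supp K n (initialForm K n a f) := fun h => hc (by rw [h, zero_mul])
    have h2 : p₂ ∈ supp K n (initialForm K n a g) := fun h => hc (by rw [h, mul_zero])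
    have hm1 := (exponent_spec hr ha hf).2 p₁ h1
    have hm2 := (exponent_spec hr ha hg).2 p₂ h2
    obtain ⟨rfl, rfl⟩ := rle_add_eq hr hradd ha hm1 hm2 hp
    exact hne rfl

lemma mul_spec (hf : f ≠ 0) (hg : g ≠ 0) :
    f * g ≠ 0 ∧
    initialForm K n a (f * g) = initialForm K n a f * initialForm K n a g ∧
    exponent K n r a (f * g) = exponent K n r a f + exponent K n r a g ∧
    MvPowerSeries.coeff (exponent K n r a (f * g)) (f * g) =
      MvPowerSeries.coeff (exponent K n r a f) f *
        MvPowerSeries.coeff (exponent K n r a g) g := by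
  set ef := exponent K n r a f
  set eg := exponent K n r a g
  have hcf : MvPowerSeries.coeff ef f ≠ 0 := exponent_mem_supp hr ha hf
  have hcg : MvPowerSeries.coeff eg g ≠ 0 := exponent_mem_supp hr ha hg
  have htop : MvPowerSeries.coeff (ef + eg) (f * g) =
      MvPowerSeries.coeff ef f * MvPowerSeries.coeff eg g := by
    rw [coeff_mul_eq_coeff_initialForm_mul hr hradd ha hf hg (le_of_eq (weight_add ef eg)),
      coeff_top_initialForm_mul hr hradd ha hf hg]
  have hne : f * g ≠ 0 := by
    intro hc
    rw [hc, map_zero] at htop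
    exact (mul_ne_zero hcf hcg) htop.symm
  -- nu of product
  have hmem : ef + eg ∈ supp K n (f * g) := by
    rw [mem_supp_iff, htop]
    exact mul_ne_zero hcf hcg
  have hmin : ∀ β ∈ supp K n (f * g), weight n a (ef + eg) ≤ weight n a β := by
    intro β hβ
    by_contra hlt
    push_neg at hlt
    rw [weight_add] at hlt
    exact hβ (coeff_mul_eq_zero_of_lt hr hradd ha hf hg hlt)
  have hnu : nu K n a (f * g) = ((weight n a (ef + eg) : ℝ) : EReal) := nu_eq_of_min hmem hmin
  -- initial form of product
  have hin : initialForm K n a (f * g) = initialForm K n a f * initialForm K n a g := by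
    ext β
    rw [coeff_initialForm, hnu]
    by_cases hw : weight n a β = weight n a (ef + eg)
    · rw [if_pos (by exact EReal.coe_eq_coe_iff.mpr hw)]
      rw [weight_add] at hw
      exact coeff_mul_eq_coeff_initialForm_mul hr hradd ha hf hg (le_of_eq hw)
    · rw [if_neg (fun h => hw (EReal.coe_eq_coe_iff.mp h))]
      by_contra hc
      have hmem' : β ∈ supp K n (initialForm K n a f * initialForm K n a g) :=
        fun h => hc h.symm
      obtain ⟨hwβ, -⟩ := weight_of_mem_supp_initialForm_mul hr hradd ha hf hg hmem'
      rw [← weight_add] at hwβ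
      exact hw hwβ
  -- exponent of product
  have hexp : exponent K n r a (f * g) = ef + eg := by
    apply exponent_eq hr ha hne
    · rw [mem_supp_iff, hin, coeff_top_initialForm_mul hr hradd ha hf hg]
      exact mul_ne_zero hcf hcg
    · intro γ hγ
      rw [hin] at hγ
      obtain ⟨-, p₁, p₂, h1, h2, rfl⟩ := weight_of_mem_supp_initialForm_mul hr hradd ha hf hg hγ
      exact rle_add hr hradd ha ((exponent_spec hr ha hf).2 p₁ h1)
        ((exponent_spec hr ha hg).2 p₂ h2)
  exact ⟨hne, hin, hexp, by rw [hexp]; exact htop⟩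

lemma one_spec : (1 : MvPowerSeries (Fin n) K) ≠ 0 ∧
    initialForm K n a (1 : MvPowerSeries (Fin n) K) = 1 ∧
    exponent K n r a (1 : MvPowerSeries (Fin n) K) = 0 := by
  classical
  have h1 : (supp K n (1 : MvPowerSeries (Fin n) K)) = {0} := by
    ext β
    simp [mem_supp_iff, MvPowerSeries.coeff_one]
  have hne : (1 : MvPowerSeries (Fin n) K) ≠ 0 := by
    intro hc
    have : (0 : Fin n →₀ ℕ) ∈ supp K n (1 : MvPowerSeries (Fin n) K) := by rw [h1]; rfl
    rw [hc] at this
    exact this (map_zero _)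
  have hnu : nu K n a (1 : MvPowerSeries (Fin n) K) = ((0 : ℝ) : EReal) := by
    have := nu_eq_of_min (a := a) (f := (1 : MvPowerSeries (Fin n) K)) (α₀ := 0)
      (by rw [h1]; rfl) (by intro β hβ; rw [h1] at hβ; cases hβ; exact le_rfl)
    rwa [weight_zero] at this
  have hin : initialForm K n a (1 : MvPowerSeries (Fin n) K) = 1 := by
    ext β
    rw [coeff_initialForm, hnu]
    by_cases hβ : β = (0 : Fin n →₀ ℕ)
    · subst hβ
      rw [if_pos (by rw [weight_zero])]
    · have : MvPowerSeries.coeff β (1 : MvPowerSeries (Fin n) K) = 0 := by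
        rw [MvPowerSeries.coeff_one, if_neg hβ]
      rw [this]
      split <;> rfl
  have hexp : exponent K n r a (1 : MvPowerSeries (Fin n) K) = 0 := by
    apply exponent_eq hr ha hne
    · rw [hin, mem_supp_iff, MvPowerSeries.coeff_one, if_pos rfl]
      exact one_ne_zero
    · intro γ hγ
      rw [hin, mem_supp_iff, MvPowerSeries.coeff_one] at hγ
      exact Or.inl (by by_contra hc; exact hγ (if_neg hc))
  exact ⟨hne, hin, hexp⟩

lemma pow_spec (hf : f ≠ 0) (e : ℕ) :
    f ^ e ≠ 0 ∧
    initialForm K n a (f ^ e) = (initialForm K n a f) ^ e ∧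
    exponent K n r a (f ^ e) = e • exponent K n r a f ∧
    MvPowerSeries.coeff (exponent K n r a (f ^ e)) (f ^ e) =
      (MvPowerSeries.coeff (exponent K n r a f) f) ^ e := by
  induction e with
  | zero =>
    obtain ⟨h1, h2, h3⟩ := one_spec (r := r) hr hradd ha (K := K)
    simp only [pow_zero, zero_smul]
    refine ⟨h1, h2, h3, ?_⟩
    rw [h3, MvPowerSeries.coeff_one (0 : Fin n →₀ ℕ) , if_pos rfl]
  | succ e ih =>
    obtain ⟨ih1, ih2, ih3, ih4⟩ := ih
    have := mul_spec hr hradd ha ih1 hf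
    rw [← pow_succ] at this
    obtain ⟨h1, h2, h3, h4⟩ := this
    refine ⟨h1, ?_, ?_, ?_⟩
    · rw [h2, ih2, pow_succ]
    · rw [h3, ih3, succ_nsmul]
    · rw [h4, ih4, pow_succ]

variable {m : ℕ} {g' : Fin m → MvPowerSeries (Fin n) K}

lemma prod_spec (hgs : ∀ i, g' i ≠ 0) (e : Fin m → ℕ) :
    (∏ i, g' i ^ e i) ≠ 0 ∧
    initialForm K n a (∏ i, g' i ^ e i) = ∏ i, (initialForm K n a (g' i)) ^ e i ∧
    exponent K n r a (∏ i, g' i ^ e i) = ∑ i, e i • exponent K n r a (g' i) ∧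
    MvPowerSeries.coeff (exponent K n r a (∏ i, g' i ^ e i)) (∏ i, g' i ^ e i) =
      ∏ i, (MvPowerSeries.coeff (exponent K n r a (g' i)) (g' i)) ^ e i := by
  classical
  have key : ∀ t : Finset (Fin m),
      (∏ i ∈ t, g' i ^ e i) ≠ 0 ∧
      initialForm K n a (∏ i ∈ t, g' i ^ e i) = ∏ i ∈ t, (initialForm K n a (g' i)) ^ e i ∧
      exponent K n r a (∏ i ∈ t, g' i ^ e i) = ∑ i ∈ t, e i • exponent K n r a (g' i) ∧
      MvPowerSeries.coeff (exponent K n r a (∏ i ∈ t, g' i ^ e i)) (∏ i ∈ t, g' i ^ e i) =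
        ∏ i ∈ t, (MvPowerSeries.coeff (exponent K n r a (g' i)) (g' i)) ^ e i := by
    intro t
    induction t using Finset.induction_on with
    | empty =>
      obtain ⟨h1, h2, h3⟩ := one_spec (r := r) hr hradd ha (K := K)
      simp only [Finset.prod_empty, Finset.sum_empty]
      refine ⟨h1, h2, h3, ?_⟩
      rw [h3, MvPowerSeries.coeff_one (0 : Fin n →₀ ℕ), if_pos rfl]
    | @insert x t hx ih =>
      obtain ⟨ih1, ih2, ih3, ih4⟩ := ih
      obtain ⟨p1, p2, p3, p4⟩ := pow_spec hr hradd ha (hgs x) (e x)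
      obtain ⟨h1, h2, h3, h4⟩ := mul_spec hr hradd ha p1 ih1
      simp only [Finset.prod_insert hx, Finset.sum_insert hx]
      refine ⟨h1, ?_, ?_, ?_⟩
      · rw [h2, ih2, p2]
      · rw [h3, ih3, p3]
      · rw [h4, ih4, p4]
  exact key Finset.univ

lemma smul_spec (hf : f ≠ 0) {c : K} (hc : c ≠ 0) :
    c • f ≠ 0 ∧
    initialForm K n a (c • f) = c • initialForm K n a f ∧
    exponent K n r a (c • f) = exponent K n r a f ∧
    MvPowerSeries.coeff (exponent K n r a (c • f)) (c • f) =
      c * MvPowerSeries.coeff (exponent K n r a f) f := by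
  have hsupp : supp K n (c • f) = supp K n f := by
    ext β
    simp only [mem_supp_iff, MvPowerSeries.coeff_smul, smul_eq_mul]
    constructor
    · intro h hc'
      exact h (by rw [hc', mul_zero])
    · exact fun h => mul_ne_zero hc h
  have hne : c • f ≠ 0 := by
    intro hcon
    obtain ⟨β, hβ⟩ := supp_nonempty hf
    have : β ∈ supp K n (c • f) := by rwa [hsupp]
    rw [hcon] at this
    exact this (map_zero _)
  have hnu : nu K n a (c • f) = nu K n a f := by
    unfold nu
    rw [hsupp]
  have hin : initialForm K n a (c • f) = c • initialForm K n a f := by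
    ext β
    simp only [coeff_initialForm, hnu, MvPowerSeries.coeff_smul]
    rw [mul_ite, mul_zero]
  have hexp : exponent K n r a (c • f) = exponent K n r a f := by
    apply exponent_eq hr ha hne
    · rw [hin, mem_supp_iff, MvPowerSeries.coeff_smul]
      exact mul_ne_zero hc (exponent_spec hr ha hf).1
    · intro γ hγ
      rw [hin, mem_supp_iff, MvPowerSeries.coeff_smul] at hγ
      apply (exponent_spec hr ha hf).2
      intro h
      exact hγ (by rw [h, mul_zero])
  refine ⟨hne, hin, hexp, ?_⟩
  rw [hexp, MvPowerSeries.coeff_smul]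

end Mul

lemma mem_closedAdjoin_iff {S : Set (MvPowerSeries (Fin n) K)} {f : MvPowerSeries (Fin n) K} :
    f ∈ closedAdjoin K n S ↔
      ∀ N : ℕ, ∃ g ∈ Algebra.adjoin K S, f - g ∈ (mIdeal K n) ^ N := Iff.rfl

lemma subset_closedAdjoin (S : Set (MvPowerSeries (Fin n) K)) :
    S ⊆ ↑(closedAdjoin K n S) := by
  intro x hx N
  exact ⟨x, Algebra.subset_adjoin hx, by rw [sub_self]; exact zero_mem _⟩

lemma adjoin_le_closedAdjoin (S : Set (MvPowerSeries (Fin n) K)) :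
    Algebra.adjoin K S ≤ closedAdjoin K n S :=
  Algebra.adjoin_le (subset_closedAdjoin S)

lemma closedAdjoin_mono {S T : Set (MvPowerSeries (Fin n) K)} (h : S ⊆ T) :
    closedAdjoin K n S ≤ closedAdjoin K n T := by
  intro x hx N
  obtain ⟨g, hg, hfg⟩ := hx N
  exact ⟨g, Algebra.adjoin_mono h hg, hfg⟩

lemma closedAdjoin_le {S T : Set (MvPowerSeries (Fin n) K)}
    (h : S ⊆ ↑(closedAdjoin K n T)) : closedAdjoin K n S ≤ closedAdjoin K n T := by
  intro x hx N
  obtain ⟨p, hp, hxp⟩ := hx N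
  have hpT : p ∈ closedAdjoin K n T := Algebra.adjoin_le h hp
  obtain ⟨q, hq, hpq⟩ := hpT N
  refine ⟨q, hq, ?_⟩
  have : x - q = (x - p) + (p - q) := by ring
  rw [this]
  exact add_mem hxp hpq

/-- total degree of an exponent -/
def degB (β : Fin n →₀ ℕ) : ℕ := ∑ i, β i

lemma degB_add (β γ : Fin n →₀ ℕ) : degB (β + γ) = degB β + degB γ := by
  simp [degB, Finsupp.add_apply, Finset.sum_add_distrib]

/-- the ideal of power series with no terms of total degree `< N`. -/
def lowIdeal (N : ℕ) : Ideal (MvPowerSeries (Fin n) K) where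
  carrier := {h | ∀ β : Fin n →₀ ℕ, degB β < N → MvPowerSeries.coeff β h = 0}
  zero_mem' := fun β _ => map_zero _
  add_mem' := fun h1 h2 β hβ => by
    rw [map_add, h1 β hβ, h2 β hβ, add_zero]
  smul_mem' := fun c h hh => by
    classical
    intro β hβ
    rw [smul_eq_mul, MvPowerSeries.coeff_mul]
    apply Finset.sum_eq_zero
    rintro ⟨p₁, p₂⟩ hp
    rw [Finset.HasAntidiagonal.mem_antidiagonal] at hp
    simp only
    have : degB p₂ < N := by
      have := degB_add p₁ p₂
      rw [hp] at this
      omega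
    rw [hh p₂ this, mul_zero]

lemma mIdeal_le_lowIdeal_one : mIdeal K n ≤ (lowIdeal 1 : Ideal (MvPowerSeries (Fin n) K)) := by
  rw [mIdeal, Ideal.span_le]
  rintro - ⟨i, rfl⟩
  intro β hβ
  have hβ0 : β = 0 := by
    ext j
    have : degB β = 0 := by omega
    have := Finset.sum_eq_zero_iff.mp this j (Finset.mem_univ j)
    exact this
  subst hβ0
  classical
  rw [MvPowerSeries.coeff_zero_X]

lemma mIdeal_pow_le_lowIdeal (N : ℕ) :
    (mIdeal K n) ^ N ≤ (lowIdeal N : Ideal (MvPowerSeries (Fin n) K)) := by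
  induction N with
  | zero =>
    intro h _ β hβ
    omega
  | succ N ih =>
    rw [pow_succ]
    apply Ideal.mul_le.mpr
    intro x hx y hy
    intro β hβ
    classical
    rw [MvPowerSeries.coeff_mul]
    apply Finset.sum_eq_zero
    rintro ⟨p₁, p₂⟩ hp
    rw [Finset.HasAntidiagonal.mem_antidiagonal] at hp
    simp only
    have hd : degB p₁ + degB p₂ < N + 1 := by
      rw [← degB_add, hp]; exact hβ
    by_cases h1 : degB p₁ < N
    · rw [ih hx p₁ h1, zero_mul]
    · have : degB p₂ < 1 := by omega
      rw [mIdeal_le_lowIdeal_one hy p₂ this, mul_zero]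

lemma coeff_eq_zero_of_mem_mIdeal_pow {h : MvPowerSeries (Fin n) K} {N : ℕ}
    (hh : h ∈ (mIdeal K n) ^ N) {β : Fin n →₀ ℕ} (hβ : degB β < N) :
    MvPowerSeries.coeff β h = 0 :=
  mIdeal_pow_le_lowIdeal N hh β hβ

lemma supp_adjoin_subset {S : Set (MvPowerSeries (Fin n) K)} {E : Set (Fin n →₀ ℕ)}
    (hE0 : (0 : Fin n →₀ ℕ) ∈ E) (hEadd : ∀ {x y : Fin n →₀ ℕ}, x ∈ E → y ∈ E → x + y ∈ E)
    (hS : ∀ s ∈ S, supp K n s ⊆ E) {q : MvPowerSeries (Fin n) K}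
    (hq : q ∈ Algebra.adjoin K S) : supp K n q ⊆ E := by
  classical
  induction hq using Algebra.adjoin_induction with
  | mem x hx => exact hS x hx
  | algebraMap c =>
    intro β hβ
    rw [mem_supp_iff] at hβ
    have : MvPowerSeries.coeff β (algebraMap K (MvPowerSeries (Fin n) K) c) =
        if β = 0 then c else 0 := by
      rw [Algebra.algebraMap_eq_smul_one, MvPowerSeries.coeff_smul, MvPowerSeries.coeff_one,
        mul_ite, mul_one, mul_zero]
    rw [this] at hβ
    by_cases h0 : β = 0
    · subst h0; exact hE0
    · rw [if_neg h0] at hβ; exact absurd rfl hβ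
  | add x y hx hy ihx ihy =>
    intro β hβ
    rw [mem_supp_iff, map_add] at hβ
    by_cases h1 : MvPowerSeries.coeff β x = 0
    · have h2 : MvPowerSeries.coeff β y ≠ 0 := fun h => hβ (by rw [h1, h, add_zero])
      exact ihy h2
    · exact ihx h1
  | mul x y hx hy ihx ihy =>
    intro β hβ
    rw [mem_supp_iff, MvPowerSeries.coeff_mul] at hβ
    obtain ⟨⟨p₁, p₂⟩, hp, hne⟩ := Finset.exists_ne_zero_of_sum_ne_zero hβ
    rw [Finset.HasAntidiagonal.mem_antidiagonal] at hp
    simp only at hne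
    have h1 : p₁ ∈ supp K n x := fun h => hne (by rw [h, zero_mul])
    have h2 : p₂ ∈ supp K n y := fun h => hne (by rw [h, mul_zero])
    rw [← hp]
    exact hEadd (ihx h1) (ihy h2)

section Main

variable (hr : IsWellOrder (Fin n →₀ ℕ) r)
  (hradd : ∀ α β γ : Fin n →₀ ℕ, r α β → r (α + γ) (β + γ))
  (ha : ∀ i, 0 < a i)

include hr hradd ha

lemma exponent_mem_monoid {m : ℕ} {g : Fin m → MvPowerSeries (Fin n) K}
    {A : Subalgebra K (MvPowerSeries (Fin n) K)}
    (hcan : leadAlgebra K n r a (A : Set (MvPowerSeries (Fin n) K)) =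
      closedAdjoin K n (Set.range fun i => leadMon K n r a (g i)))
    {f : MvPowerSeries (Fin n) K} (hfA : f ∈ A) (hf : f ≠ 0) :
    ∃ e : Fin m → ℕ, exponent K n r a f = ∑ i, e i • exponent K n r a (g i) := by
  classical
  set E : Set (Fin n →₀ ℕ) :=
    {β | ∃ e : Fin m → ℕ, β = ∑ i, e i • exponent K n r a (g i)} with hE
  have hE0 : (0 : Fin n →₀ ℕ) ∈ E := ⟨0, by simp⟩
  have hEadd : ∀ {x y : Fin n →₀ ℕ}, x ∈ E → y ∈ E → x + y ∈ E := by
    rintro x y ⟨e1, rfl⟩ ⟨e2, rfl⟩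
    refine ⟨e1 + e2, ?_⟩
    rw [← Finset.sum_add_distrib]
    apply Finset.sum_congr rfl
    intro i _
    rw [Pi.add_apply, add_smul]
  have hEg : ∀ i : Fin m, exponent K n r a (g i) ∈ E := by
    intro i
    refine ⟨fun j => if j = i then 1 else 0, ?_⟩
    rw [Finset.sum_eq_single i]
    · simp
    · intro j _ hj
      simp [hj]
    · intro hi
      exact absurd (Finset.mem_univ i) hi
  have hMf : leadMon K n r a f ∈ leadAlgebra K n r a (A : Set (MvPowerSeries (Fin n) K)) :=
    subset_closedAdjoin _ ⟨f, hfA, hf, rfl⟩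
  rw [hcan] at hMf
  obtain ⟨q, hq, hsub⟩ := hMf (degB (exponent K n r a f) + 1)
  have h0 := coeff_eq_zero_of_mem_mIdeal_pow hsub
    (β := exponent K n r a f) (by omega)
  rw [map_sub, sub_eq_zero] at h0
  have hlead : MvPowerSeries.coeff (exponent K n r a f) (leadMon K n r a f) =
      MvPowerSeries.coeff (exponent K n r a f) f := by
    rw [leadMon, MvPowerSeries.coeff_monomial, if_pos rfl]
  have hcq : MvPowerSeries.coeff (exponent K n r a f) q ≠ 0 := by
    rw [← h0, hlead]
    exact exponent_mem_supp hr ha hf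
  have hsupq : supp K n q ⊆ E := by
    apply supp_adjoin_subset hE0 (fun hx hy => hEadd hx hy) _ hq
    rintro - ⟨i, rfl⟩
    show supp K n (leadMon K n r a (g i)) ⊆ E
    intro β hβ
    rw [mem_supp_iff, leadMon, MvPowerSeries.coeff_monomial] at hβ
    by_cases hc : β = exponent K n r a (g i)
    · subst hc; exact hEg i
    · rw [if_neg hc] at hβ; exact absurd rfl hβ
  exact hsupq hcq

lemma initialForm_mem_adjoin {A : Subalgebra K (MvPowerSeries (Fin n) K)} {m : ℕ}
    {g : Fin m → MvPowerSeries (Fin n) K}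
    (hgA : ∀ i, g i ∈ A ∧ g i ≠ 0)
    (hmonic : ∀ i, MvPowerSeries.coeff (exponent K n r a (g i)) (g i) = 1)
    (hcan : leadAlgebra K n r a (A : Set (MvPowerSeries (Fin n) K)) =
      closedAdjoin K n (Set.range fun i => leadMon K n r a (g i)))
    {f : MvPowerSeries (Fin n) K} (hfA : f ∈ A) (hf : f ≠ 0) :
    initialForm K n a f ∈ Algebra.adjoin K (Set.range fun i => initialForm K n a (g i)) := by
  classical
  suffices H : ∀ β : Fin n →₀ ℕ, ∀ f : MvPowerSeries (Fin n) K, f ∈ A → f ≠ 0 →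
      exponent K n r a f = β →
      initialForm K n a f ∈ Algebra.adjoin K (Set.range fun i => initialForm K n a (g i)) by
    exact H _ f hfA hf rfl
  intro β
  induction β using (hr.wf).induction with
  | _ β IH =>
  intro f hfA hf hexpf
  subst hexpf
  obtain ⟨e, he⟩ := exponent_mem_monoid hr hradd ha hcan hfA hf
  set c := MvPowerSeries.coeff (exponent K n r a f) f with hc_def
  have hc : c ≠ 0 := exponent_mem_supp hr ha hf
  obtain ⟨hp0, hpin, hpexp, hpcoeff⟩ := prod_spec hr hradd ha (g' := g) (fun i => (hgA i).2) e
  obtain ⟨hh0, hhin, hhexp, hhcoeff⟩ := smul_spec hr hradd ha hp0 hc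
  set h : MvPowerSeries (Fin n) K := c • ∏ i, g i ^ e i with hh_def
  have hexpP : exponent K n r a (∏ i, g i ^ e i) = exponent K n r a f := by
    rw [hpexp, ← he]
  have hexph : exponent K n r a h = exponent K n r a f := by
    rw [hh_def, hhexp, hexpP]
  have hch : MvPowerSeries.coeff (exponent K n r a f) h = c := by
    have h2 := hhcoeff
    rw [hpcoeff, hhexp, hexpP] at h2
    rw [h2]
    have h3 : ∀ i ∈ Finset.univ, (MvPowerSeries.coeff (exponent K n r a (g i)) (g i)) ^ e i
        = (1 : K) := by
      intro i _
      rw [hmonic i, one_pow]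
    rw [Finset.prod_congr rfl h3, Finset.prod_const_one, mul_one]
  have hhin_mem : initialForm K n a h ∈
      Algebra.adjoin K (Set.range fun i => initialForm K n a (g i)) := by
    rw [hh_def, hhin, hpin]
    apply Subalgebra.smul_mem
    apply prod_mem
    intro i _
    apply pow_mem
    exact Algebra.subset_adjoin ⟨i, rfl⟩
  have hhA : h ∈ A := by
    rw [hh_def]
    apply A.smul_mem
    apply prod_mem
    intro i _
    exact pow_mem (hgA i).1 _
  set d := weight n a (exponent K n r a f) with hd_def
  have hnuf : nu K n a f = ((d : ℝ) : EReal) := nu_eq_weight_exponent hr ha hf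
  have hnuh : nu K n a h = ((d : ℝ) : EReal) := by
    rw [nu_eq_weight_exponent hr ha hh0, hexph]
  have hlowf : ∀ γ : Fin n →₀ ℕ, weight n a γ < d → MvPowerSeries.coeff γ f = 0 := by
    intro γ hγ
    apply coeff_eq_zero_of_lt_nu
    rw [hnuf]
    exact_mod_cast hγ
  have hlowh : ∀ γ : Fin n →₀ ℕ, weight n a γ < d → MvPowerSeries.coeff γ h = 0 := by
    intro γ hγ
    apply coeff_eq_zero_of_lt_nu
    rw [hnuh]
    exact_mod_cast hγ
  have htopzero : MvPowerSeries.coeff (exponent K n r a f) (f - h) = 0 := by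
    rw [map_sub, hch, ← hc_def, sub_self]
  by_cases hzero : f - h = 0
  · have hfh : f = h := by rwa [sub_eq_zero] at hzero
    rw [hfh]
    exact hhin_mem
  · by_cases hlev : ∃ γ : Fin n →₀ ℕ, weight n a γ = d ∧ MvPowerSeries.coeff γ (f - h) ≠ 0
    · obtain ⟨γ0, hγ0w, hγ0⟩ := hlev
      have hlowfh : ∀ γ : Fin n →₀ ℕ, weight n a γ < d →
          MvPowerSeries.coeff γ (f - h) = 0 := by
        intro γ hγ
        rw [map_sub, hlowf γ hγ, hlowh γ hγ, sub_zero]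
      have hminfh : ∀ δ ∈ supp K n (f - h), weight n a γ0 ≤ weight n a δ := by
        intro δ hδ
        by_contra hlt
        push_neg at hlt
        rw [hγ0w] at hlt
        exact hδ (hlowfh δ hlt)
      have hnufh : nu K n a (f - h) = ((d : ℝ) : EReal) := by
        rw [← hγ0w]
        exact nu_eq_of_min hγ0 hminfh
      -- the exponent of f - h is r-smaller than that of f
      have hrel : r (exponent K n r a (f - h)) (exponent K n r a f) := by
        obtain ⟨hs, hw⟩ := mem_supp_initialForm_iff.mp (exponent_spec hr ha hzero).1
        have hne_exp : exponent K n r a (f - h) ≠ exponent K n r a f := by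
          intro hcon
          rw [hcon] at hs
          exact hs htopzero
        rw [hnufh] at hw
        have hwd : weight n a (exponent K n r a (f - h)) = d := EReal.coe_eq_coe_iff.mp hw
        by_cases hcf : MvPowerSeries.coeff (exponent K n r a (f - h)) f ≠ 0
        · have : exponent K n r a (f - h) ∈ supp K n (initialForm K n a f) :=
            mem_supp_initialForm_iff.mpr ⟨hcf, by rw [hnuf, hwd]⟩
          rcases (exponent_spec hr ha hf).2 _ this with hcon|hlt
          · exact absurd hcon hne_exp
          · exact hlt
        · push_neg at hcf
          have hcg : MvPowerSeries.coeff (exponent K n r a (f - h)) h ≠ 0 := by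
            intro hcon
            apply hs
            rw [map_sub, hcf, hcon, sub_zero]
          have : exponent K n r a (f - h) ∈ supp K n (initialForm K n a h) :=
            mem_supp_initialForm_iff.mpr ⟨hcg, by rw [hnuh, hwd]⟩
          rcases (exponent_spec hr ha hh0).2 _ this with hcon|hlt
          · rw [hexph] at hcon
            exact absurd hcon hne_exp
          · rw [hexph] at hlt
            exact hlt
      have hrec := IH _ hrel (f - h) (A.sub_mem hfA hhA) hzero rfl
      have hsplit : initialForm K n a f = initialForm K n a h + initialForm K n a (f - h) := by
        ext γ
        rw [map_add, coeff_initialForm, coeff_initialForm, coeff_initialForm, hnuf, hnuh, hnufh]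
        by_cases hw : ((weight n a γ : ℝ) : EReal) = ((d : ℝ) : EReal)
        · rw [if_pos hw, if_pos hw, if_pos hw, map_sub]
          ring
        · rw [if_neg hw, if_neg hw, if_neg hw, add_zero]
      rw [hsplit]
      exact add_mem hhin_mem hrec
    · push_neg at hlev
      have heq : initialForm K n a f = initialForm K n a h := by
        ext γ
        rw [coeff_initialForm, coeff_initialForm, hnuf, hnuh]
        by_cases hw : ((weight n a γ : ℝ) : EReal) = ((d : ℝ) : EReal)
        · rw [if_pos hw, if_pos hw]
          have := hlev γ (EReal.coe_eq_coe_iff.mp hw)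
          rw [map_sub, sub_eq_zero] at this
          exact this
        · rw [if_neg hw, if_neg hw]
      rw [heq]
      exact hhin_mem

end Main

end Aux
/-- `in(A,a)` is generated by the initial forms of an `a`-reduced canonical
basis of `A`. -/
theorem inAlgebra_eq_closedAdjoin_initialForms
    (r : (Fin n →₀ ℕ) → (Fin n →₀ ℕ) → Prop) (hr : IsWellOrder (Fin n →₀ ℕ) r)
    (hradd : ∀ α β γ : Fin n →₀ ℕ, r α β → r (α + γ) (β + γ))
    (s : ℕ) (f : Fin s → MvPowerSeries (Fin n) K) (hf : ∀ i, f i ≠ 0)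
    (A : Subalgebra K (MvPowerSeries (Fin n) K)) (hA : A = closedAdjoin K n (Set.range f))
    (hlen : FiniteColength K n A)
    (a : Fin n → ℝ) (ha : ∀ i, 0 < a i)
    (m : ℕ) (g : Fin m → MvPowerSeries (Fin n) K)
    (hg : IsReducedCanonicalBasis K n r a A g) :
    inAlgebra K n a (A : Set (MvPowerSeries (Fin n) K)) =
      closedAdjoin K n (Set.range fun i => initialForm K n a (g i)) := by
  obtain ⟨⟨⟨hmem, hcan⟩, -⟩, hmonic, -⟩ := hg
  apply le_antisymm
  · unfold inAlgebra
    apply closedAdjoin_le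
    rintro x ⟨f0, hf0A, hf0ne, rfl⟩
    exact adjoin_le_closedAdjoin _
      (initialForm_mem_adjoin hr hradd ha hmem hmonic hcan hf0A hf0ne)
  · unfold inAlgebra
    apply closedAdjoin_mono
    rintro x ⟨i, rfl⟩
    exact ⟨g i, (hmem i).1, (hmem i).2, rfl⟩

end CanonicalFan
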